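/- In the inductive characterization of increasing cones: a cone C ⊆ (R_{≥0})^n is an increasing cone if and only if e₁ = (1,0,…,0) ∈ C and the normal cone N_{e₁}C := {(v₂,…,v_n) ∈ (R_{≥0})^{n−1} : ∃ t₀ > 0 such that (1, t v₂,…, t v_n) ∈ C for all 0 ≤ t ≤ t₀} is an increasing cone in (R_{≥0})^{n−1}. -/

import Mathlib

open Filter Topology

/-- A cone: convex and closed under nonnegative scaling. -/
def IsCone {V : Type*} [AddCommGroup V] [Module ℝ V] (C : Set V) : Prop :=
  Convex ℝ C ∧ ∀ c ∈ C, ∀ a : ℝ, 0 ≤ a → a • c ∈ C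

/-- A dense rational lattice in a real normed vector space. -/
structure RatLattice (V : Type*) [NormedAddCommGroup V] [NormedSpace ℝ V] where
  carrier : Set V
  zero_mem : (0 : V) ∈ carrier
  add_mem : ∀ v ∈ carrier, ∀ w ∈ carrier, v + w ∈ carrier
  ratsmul_mem : ∀ (q : ℚ), ∀ v ∈ carrier, (q : ℝ) • v ∈ carrier
  dense : Dense carrier

/-- A subspace is rational if its rational points are dense in it. -/
def IsRationalSubspace {V : Type*} [NormedAddCommGroup V] [NormedSpace ℝ V]
    (L : RatLattice V) (W : Submodule ℝ V) : Prop :=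
  (W : Set V) ⊆ closure ((W : Set V) ∩ L.carrier)

/-- A vector is generic if it lies in no proper rational subspace. -/
def IsGenericVec {V : Type*} [NormedAddCommGroup V] [NormedSpace ℝ V]
    (L : RatLattice V) (η : V) : Prop :=
  ∀ W : Submodule ℝ V, IsRationalSubspace L W → η ∈ W → W = ⊤

/-- A rational cone: a cone contained in a rational subspace that it spans. -/
def IsRationalCone {V : Type*} [NormedAddCommGroup V] [NormedSpace ℝ V]
    (L : RatLattice V) (C : Set V) : Prop :=
  IsCone C ∧ ∃ W : Submodule ℝ V, IsRationalSubspace L W ∧ C ⊆ (W : Set V) ∧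
    Submodule.span ℝ C = W

/-- An increasing sequence of tuples: all entries positive, each coordinate tends to
infinity, and each later coordinate grows strictly slower than the previous one. -/
def IsIncreasingSeq {n : ℕ} (x : ℕ → Fin n → ℝ) : Prop :=
  (∀ ν i, 0 < x ν i) ∧
  (∀ i, Filter.Tendsto (fun ν => x ν i) Filter.atTop Filter.atTop) ∧
  (∀ i j : Fin n, (i : ℕ) + 1 = (j : ℕ) →
    Filter.Tendsto (fun ν => x ν j / x ν i) Filter.atTop (nhds 0))

/-- The slice of a cone where the coordinates after `i` vanish. -/
def coneSlice {n : ℕ} (C : Set (Fin n → ℝ)) (i : Fin n) : Set (Fin n → ℝ) :=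
  {x | x ∈ C ∧ ∀ j : Fin n, (i : ℕ) < (j : ℕ) → x j = 0}

/-- An increasing cone in the nonnegative orthant: the slice where the last
`n - i` coordinates vanish is an `i`-dimensional cone, for each `i`. -/
def IsIncreasingCone {n : ℕ} (C : Set (Fin n → ℝ)) : Prop :=
  IsCone C ∧ (∀ x ∈ C, ∀ i, 0 ≤ x i) ∧
  ∀ i : Fin n, Module.finrank ℝ (Submodule.span ℝ (coneSlice C i)) = (i : ℕ) + 1

/-- The normal cone of `C` at `e₁ = (1,0,…,0)`. -/
def normalConeAtE1 {n : ℕ} (C : Set (Fin (n + 1) → ℝ)) : Set (Fin n → ℝ) :=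
  {v | (∀ i, 0 ≤ v i) ∧
    ∃ t₀ : ℝ, 0 < t₀ ∧ ∀ t : ℝ, 0 ≤ t → t ≤ t₀ → Fin.cons 1 (t • v) ∈ C}

-- auxiliary
def tailL (n : ℕ) : (Fin (n+1) → ℝ) →ₗ[ℝ] (Fin n → ℝ) := LinearMap.funLeft ℝ ℝ Fin.succ

lemma ker_tailL (n : ℕ) :
    LinearMap.ker (tailL n) = Submodule.span ℝ {(Fin.cons 1 0 : Fin (n+1) → ℝ)} := by
  ext x
  constructor
  · intro h
    have hk : ∀ k : Fin n, x k.succ = 0 := fun k => congrFun (LinearMap.mem_ker.mp h) k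
    have hx : x = x 0 • (Fin.cons 1 0 : Fin (n+1) → ℝ) := by
      funext j
      rcases Fin.eq_zero_or_eq_succ j with rfl | ⟨k, rfl⟩
      · simp
      · simp [hk k]
    rw [hx]
    exact Submodule.smul_mem _ _ (Submodule.mem_span_singleton_self _)
  · intro h
    rw [Submodule.mem_span_singleton] at h
    obtain ⟨a, rfl⟩ := h
    rw [LinearMap.mem_ker]
    funext k
    simp [tailL]

lemma e1_mem_slice {n : ℕ} (C : Set (Fin (n+1) → ℝ)) (he : Fin.cons 1 0 ∈ C)
    (i : Fin (n+1)) : (Fin.cons 1 0 : Fin (n+1) → ℝ) ∈ coneSlice C i := by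
  refine ⟨he, fun j hj => ?_⟩
  rcases Fin.eq_zero_or_eq_succ j with rfl | ⟨k, rfl⟩
  · simp at hj
  · simp

lemma normalCone_eq_image {n : ℕ} (C : Set (Fin (n+1) → ℝ)) (hC : IsCone C)
    (hpos : ∀ x ∈ C, ∀ i, 0 ≤ x i) (he : Fin.cons 1 0 ∈ C) :
    normalConeAtE1 C = (tailL n) '' C := by
  ext v
  constructor
  · rintro ⟨hv, t₀, ht₀, hall⟩
    refine ⟨t₀⁻¹ • (Fin.cons 1 (t₀ • v) : Fin (n+1) → ℝ), hC.2 _ (hall t₀ ht₀.le le_rfl) _ (by positivity), ?_⟩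
    funext k
    simp [tailL, ht₀.ne']
  · rintro ⟨x, hx, rfl⟩
    refine ⟨fun k => hpos x hx k.succ, ?_⟩
    obtain ⟨b, hb⟩ : ∃ b : ℝ, b = 1 - x 0 := ⟨_, rfl⟩
    refine ⟨1/(2*(|b|+1)), by positivity, fun t ht0 ht1 => ?_⟩
    have hbt : |t * b| ≤ 1/2 := by
      rw [abs_mul, abs_of_nonneg ht0]
      calc t * |b| ≤ (1/(2*(|b|+1))) * |b| := by
            apply mul_le_mul_of_nonneg_right ht1 (abs_nonneg b)
        _ ≤ 1/2 := by
            rw [div_mul_eq_mul_div, one_mul, div_le_div_iff₀ (by positivity) (by norm_num)]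
            nlinarith [abs_nonneg b]
    have hc : (1:ℝ)/2 ≤ 1 + t * b := by
      have := abs_le.mp hbt
      linarith [this.1]
    obtain ⟨c, hcdef⟩ : ∃ c : ℝ, c = 1 + t * b := ⟨_, rfl⟩
    rw [← hcdef] at hc
    have hcpos : 0 < c := by linarith
    obtain ⟨s, hs⟩ : ∃ s : ℝ, s = t / c := ⟨_, rfl⟩
    have hs0 : 0 ≤ s := hs ▸ div_nonneg ht0 hcpos.le
    have hs1 : s ≤ 1 := by
      rw [hs, div_le_one hcpos]
      calc t ≤ 1/(2*(|b|+1)) := ht1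
        _ ≤ 1/2 := by
            apply div_le_div_of_nonneg_left (by norm_num) (by norm_num)
            nlinarith [abs_nonneg b]
        _ ≤ c := hc
    have hmem : (1 - s) • (Fin.cons 1 0 : Fin (n+1) → ℝ) + s • x ∈ C :=
      hC.1 he hx (by linarith) hs0 (by ring)
    have hmem2 : c • ((1 - s) • (Fin.cons 1 0 : Fin (n+1) → ℝ) + s • x) ∈ C :=
      hC.2 _ hmem c hcpos.le
    have hcs : c * s = t := by rw [hs]; field_simp [hcpos.ne']
    have heq : Fin.cons 1 (t • tailL n x) =
        c • ((1 - s) • (Fin.cons 1 0 : Fin (n+1) → ℝ) + s • x) := by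
      funext j
      refine Fin.cases ?_ (fun k => ?_) j
      · simp only [Fin.cons_zero, Pi.smul_apply, Pi.add_apply, smul_eq_mul]
        have : c * ((1 - s) * 1 + s * x 0) = c - c * s * b := by rw [hb]; ring
        rw [this, hcs]
        rw [hcdef]; ring
      · simp only [Fin.cons_succ, Pi.smul_apply, Pi.add_apply, smul_eq_mul, tailL,
          LinearMap.funLeft_apply, Function.comp_apply]
        rw [Pi.zero_apply]
        linear_combination (-(x k.succ)) * hcs
    rw [heq]; exact hmem2

lemma slice_image {n : ℕ} (C : Set (Fin (n+1) → ℝ)) (hC : IsCone C)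
    (hpos : ∀ x ∈ C, ∀ i, 0 ≤ x i) (he : Fin.cons 1 0 ∈ C) (i : Fin n) :
    coneSlice (normalConeAtE1 C) i = (tailL n) '' (coneSlice C i.succ) := by
  rw [normalCone_eq_image C hC hpos he]
  ext v
  constructor
  · rintro ⟨⟨x, hx, rfl⟩, hz⟩
    refine ⟨x, ⟨hx, fun j hj => ?_⟩, rfl⟩
    rcases Fin.eq_zero_or_eq_succ j with rfl | ⟨k, rfl⟩
    · simp [Fin.val_succ] at hj
    · have : (i : ℕ) < (k : ℕ) := by
        simp only [Fin.val_succ] at hj; omega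
      exact hz k this
  · rintro ⟨x, ⟨hx, hz⟩, rfl⟩
    refine ⟨⟨x, hx, rfl⟩, fun k hk => ?_⟩
    have : ((i.succ : Fin (n+1)) : ℕ) < (k.succ : ℕ) := by
      simp only [Fin.val_succ]; omega
    exact hz k.succ this

set_option synthInstance.maxHeartbeats 1000000 in
lemma finrank_image_slice {n : ℕ} (C : Set (Fin (n+1) → ℝ)) (he : Fin.cons 1 0 ∈ C)
    (i : Fin n) :
    Module.finrank ℝ (Submodule.span ℝ ((tailL n) '' coneSlice C i.succ)) + 1
      = Module.finrank ℝ (Submodule.span ℝ (coneSlice C i.succ)) := by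
  set T := Submodule.span ℝ (coneSlice C i.succ) with hT
  have heT : (Fin.cons 1 0 : Fin (n+1) → ℝ) ∈ T :=
    Submodule.subset_span (e1_mem_slice C he _)
  rw [Submodule.span_image]
  set f : T →ₗ[ℝ] (Fin n → ℝ) := (tailL n).comp T.subtype with hf
  have hrange : LinearMap.range f = T.map (tailL n) := by
    rw [hf, LinearMap.range_comp, Submodule.range_subtype]
  have hle : LinearMap.ker (tailL n) ≤ T := by
    rw [ker_tailL]
    exact (Submodule.span_singleton_le_iff_mem _ _).mpr heT
  have hker : Module.finrank ℝ (LinearMap.ker f) = 1 := by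
    rw [hf, LinearMap.ker_comp]
    rw [(Submodule.comapSubtypeEquivOfLe hle).finrank_eq]
    rw [ker_tailL]
    exact finrank_span_singleton (by
      intro h
      have := congrFun h 0
      simp at this)
  have hrn := LinearMap.finrank_range_add_finrank_ker f
  rw [hrange, hker] at hrn
  rw [← hrn]

lemma span_slice_zero {n : ℕ} (C : Set (Fin (n+1) → ℝ)) (he : Fin.cons 1 0 ∈ C) :
    Submodule.span ℝ (coneSlice C 0) = Submodule.span ℝ {(Fin.cons 1 0 : Fin (n+1) → ℝ)} := by
  apply le_antisymm
  · rw [Submodule.span_le]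
    intro x hx
    have hx2 : x = x 0 • (Fin.cons 1 0 : Fin (n+1) → ℝ) := by
      funext j
      rcases Fin.eq_zero_or_eq_succ j with rfl | ⟨k, rfl⟩
      · simp
      · have : x k.succ = 0 := hx.2 k.succ (by simp [Fin.val_succ])
        simp [this]
    rw [hx2]
    exact Submodule.smul_mem _ _ (Submodule.mem_span_singleton_self _)
  · rw [Submodule.span_le, Set.singleton_subset_iff]
    exact Submodule.subset_span (e1_mem_slice C he 0)

lemma e1_mem_of_rank {n : ℕ} (C : Set (Fin (n+1) → ℝ)) (hC : IsCone C)
    (hpos : ∀ x ∈ C, ∀ i, 0 ≤ x i)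
    (h0 : Module.finrank ℝ (Submodule.span ℝ (coneSlice C 0)) = 1) :
    Fin.cons 1 0 ∈ C := by
  have hne : ∃ x ∈ coneSlice C 0, x ≠ 0 := by
    by_contra h
    push_neg at h
    have hsp : Submodule.span ℝ (coneSlice C 0) = ⊥ := by
      rw [Submodule.eq_bot_iff]
      intro x hx
      refine Submodule.span_induction (fun y hy => h y hy) rfl ?_ ?_ hx
      · rintro a b _ _ rfl rfl; simp
      · rintro a b _ rfl; simp
    rw [hsp] at h0
    simp at h0
  obtain ⟨x, ⟨hxC, hxz⟩, hx0⟩ := hne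
  have hpos0 : 0 < x 0 := by
    rcases (hpos x hxC 0).lt_or_eq with h | h
    · exact h
    · exfalso
      apply hx0
      funext j
      rcases Fin.eq_zero_or_eq_succ j with rfl | ⟨k, rfl⟩
      · exact h.symm
      · exact hxz k.succ (by simp [Fin.val_succ])
  have : (x 0)⁻¹ • x ∈ C := hC.2 x hxC _ (by positivity)
  convert this using 1
  funext j
  rcases Fin.eq_zero_or_eq_succ j with rfl | ⟨k, rfl⟩
  · simp [inv_mul_cancel₀ hpos0.ne']
  · simp [hxz k.succ (by simp [Fin.val_succ] : ((0:Fin (n+1)):ℕ) < (k.succ : ℕ))]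

private theorem increasing_cone_iff_aux
    {n : ℕ} (C : Set (Fin (n + 1) → ℝ)) (hC : IsCone C)
    (hpos : ∀ x ∈ C, ∀ i, 0 ≤ x i) :
    IsIncreasingCone C ↔
      (Fin.cons 1 0 ∈ C ∧ IsIncreasingCone (normalConeAtE1 C)) := by
  constructor
  · rintro ⟨-, -, hrank⟩
    have he : Fin.cons 1 0 ∈ C := e1_mem_of_rank C hC hpos (by simpa using hrank 0)
    refine ⟨he, ?_, ?_, ?_⟩
    · rw [normalCone_eq_image C hC hpos he]
      constructor
      · exact hC.1.linear_image (tailL n)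
      · rintro v ⟨x, hx, rfl⟩ a ha
        exact ⟨a • x, hC.2 x hx a ha, map_smul _ _ _⟩
    · rintro v ⟨hv, -⟩ i
      exact hv i
    · intro i
      have h1 := finrank_image_slice C he i
      rw [← slice_image C hC hpos he i] at h1
      have h2 := hrank i.succ
      rw [Fin.val_succ] at h2
      omega
  · rintro ⟨he, -, -, hrank⟩
    refine ⟨hC, hpos, fun i => ?_⟩
    rcases Fin.eq_zero_or_eq_succ i with rfl | ⟨k, rfl⟩
    · rw [span_slice_zero C he]
      simp [finrank_span_singleton (show (Fin.cons 1 0 : Fin (n+1) → ℝ) ≠ 0 by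
        intro h; have := congrFun h 0; simp at this)]
    · have h1 := finrank_image_slice C he k
      rw [← slice_image C hC hpos he k] at h1
      have h2 := hrank k
      rw [Fin.val_succ]
      omega

/-- Inductive characterization of increasing cones: `C` is an increasing
cone iff `e₁ ∈ C` and the normal cone of `C` at `e₁` is an increasing cone. -/
theorem increasing_cone_iff_e1_mem_and_normal_cone_increasing
    {n : ℕ} (C : Set (Fin (n + 1) → ℝ)) (hC : IsCone C)
    (hpos : ∀ x ∈ C, ∀ i, 0 ≤ x i) :
    IsIncreasingCone C ↔
      (Fin.cons 1 0 ∈ C ∧ IsIncreasingCone (normalConeAtE1 C)) := increasing_cone_iff_aux C hC hpos
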